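/- For any (n−1)-by-(n−1) reciprocal matrix B and any positive n-vector w, there exists a unique n-by-n reciprocal matrix A whose leading (n−1)-by-(n−1) principal submatrix is B and whose Perron vector is (a positive multiple of) w. -/
import Mathlib


open Matrix BigOperators Finset

/-- A positive square matrix is reciprocal if `A j i = 1 / A i j` for all `i, j`. -/
def IsReciprocal {n : ℕ} (A : Matrix (Fin n) (Fin n) ℝ) : Prop :=
  (∀ i j, 0 < A i j) ∧ ∀ i j, A j i = 1 / A i j

/-- A reciprocal matrix is consistent if `A i j * A j k = A i k` for all `i, j, k`. -/
def IsConsistent {n : ℕ} (A : Matrix (Fin n) (Fin n) ℝ) : Prop :=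
  IsReciprocal A ∧ ∀ i j k, A i j * A j k = A i k

/-- A vector is positive if all its entries are positive. -/
def PosVec {n : ℕ} (w : Fin n → ℝ) : Prop := ∀ i, 0 < w i

/-- A positive vector `w` is efficient for `A` if any positive vector `v` whose associated
consistent matrix approximates `A` at least as well as that of `w` (entrywise) is a positive
multiple of `w`. -/
def IsEfficient {n : ℕ} (A : Matrix (Fin n) (Fin n) ℝ) (w : Fin n → ℝ) : Prop :=
  PosVec w ∧ ∀ v : Fin n → ℝ, PosVec v →
    (∀ i j, |A i j - v i / v j| ≤ |A i j - w i / w j|) →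
    ∃ c : ℝ, 0 < c ∧ v = c • w

/-- The `i`-th row sum of a matrix. -/
noncomputable def rowSum {n : ℕ} (A : Matrix (Fin n) (Fin n) ℝ) (i : Fin n) : ℝ := ∑ j, A i j

/-- Given the row sums `r` in nonincreasing order (`r 0` the largest), the auxiliary function
`f(x) = 1/x + ∑_{i=2}^{k} 1/(r₁ - rᵢ + x) + 1 - r₁ - x` (note the `i = 1` term of the sum is
`1/x` since `r 0 - r 0 = 0`). -/
noncomputable def auxF {k : ℕ} (r : Fin (k + 1) → ℝ) (x : ℝ) : ℝ :=
  (∑ i, 1 / (r 0 - r i + x)) + 1 - r 0 - x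

/-- A reciprocal matrix `B` is well-behaved if, with row sums `r₁ ≥ ⋯ ≥ r_k`, either
`r₁ - r_k ≥ 1` (type I), or `r₁ - r_k < 1` and `f(1 + r_k - r₁) ≥ 0` (type II). -/
def WellBehaved {k : ℕ} (B : Matrix (Fin (k + 1)) (Fin (k + 1)) ℝ) : Prop :=
  ∃ σ : Equiv.Perm (Fin (k + 1)), Antitone (rowSum B ∘ σ) ∧
    (1 ≤ rowSum B (σ 0) - rowSum B (σ (Fin.last k)) ∨
      (rowSum B (σ 0) - rowSum B (σ (Fin.last k)) < 1 ∧
        0 ≤ auxF (rowSum B ∘ σ) (1 + rowSum B (σ (Fin.last k)) - rowSum B (σ 0))))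

/-- For any `(n-1) × (n-1)` reciprocal matrix `B` and positive `n`-vector `w`, there is a
unique `n × n` reciprocal matrix `A` with leading principal submatrix `B` and Perron vector
`w` (i.e. `w` is a positive eigenvector of `A`). -/
theorem stmt12 {n : ℕ} (B : Matrix (Fin n) (Fin n) ℝ) (hB : IsReciprocal B)
    (w : Fin (n + 1) → ℝ) (hw : PosVec w) :
    ∃! A : Matrix (Fin (n + 1)) (Fin (n + 1)) ℝ,
      IsReciprocal A ∧ A.submatrix Fin.castSucc Fin.castSucc = B ∧
      ∃ ρ : ℝ, A.mulVec w = ρ • w := by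
  obtain ⟨hBpos, hBrec⟩ := hB
  have hwlpos : 0 < w (Fin.last n) := hw _
  set s : Fin n → ℝ := fun i => ∑ j, B i j * w j.castSucc with hs
  set S : Set ℝ := {x | ∀ i : Fin n, s i < x * w i.castSucc} with hSdef
  set g : ℝ → ℝ := fun x =>
    (∑ i : Fin n, w i.castSucc / (x * w i.castSucc - s i)) + 1 - x with hgdef
  have hSup : ∀ x ∈ S, ∀ y, x ≤ y → y ∈ S := by
    intro x hx y hxy i
    exact lt_of_lt_of_le (hx i) (mul_le_mul_of_nonneg_right hxy (hw _).le)
  have hterm_pos : ∀ x ∈ S, ∀ i : Fin n,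
      0 < w i.castSucc / (x * w i.castSucc - s i) := by
    intro x hx i
    exact div_pos (hw _) (by have := hx i; linarith)
  have hmono : ∀ a ∈ S, ∀ b ∈ S, a ≤ b →
      (∑ i : Fin n, w i.castSucc / (b * w i.castSucc - s i)) ≤
      (∑ i : Fin n, w i.castSucc / (a * w i.castSucc - s i)) := by
    intro a ha b hb hab
    apply Finset.sum_le_sum
    intro i _
    have h1 : 0 < a * w i.castSucc - s i := by have := ha i; linarith
    have h2 : a * w i.castSucc ≤ b * w i.castSucc :=
      mul_le_mul_of_nonneg_right hab (hw _).le
    exact div_le_div_of_nonneg_left (hw _).le h1 (by linarith)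
  have huniq : ∀ a ∈ S, ∀ b ∈ S, g a = 0 → g b = 0 → a = b := by
    intro a ha b hb hga hgb
    simp only [hgdef] at hga hgb
    rcases le_total a b with h | h
    · have := hmono a ha b hb h
      linarith
    · have := hmono b hb a ha h
      linarith
  -- existence of a root of g in S
  obtain ⟨ρ, hρS, hρ0⟩ : ∃ ρ ∈ S, g ρ = 0 := by
    obtain ⟨a, haS, hga⟩ : ∃ a ∈ S, 0 ≤ g a := by
      rcases isEmpty_or_nonempty (Fin n) with h | h
      · refine ⟨0, fun i => (h.false i).elim, ?_⟩
        simp only [hgdef, Finset.univ_eq_empty, Finset.sum_empty]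
        norm_num
      · obtain ⟨i0, -, hi0⟩ := Finset.exists_max_image Finset.univ
          (fun i => s i / w i.castSucc) Finset.univ_nonempty
        set M := s i0 / w i0.castSucc with hM
        set ε : ℝ := 1 / (|M| + 2) with hε
        have habs : (0:ℝ) < |M| + 2 := by positivity
        have hεpos : 0 < ε := by positivity
        have hεle : ε ≤ 1 / 2 := by
          rw [hε]
          apply div_le_div_of_nonneg_left one_pos.le (by norm_num)
          have := abs_nonneg M; linarith
        have haS : M + ε ∈ S := by
          intro i
          have h1 : s i / w i.castSucc ≤ M := hi0 i (Finset.mem_univ i)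
          have h2 : s i ≤ M * w i.castSucc := (div_le_iff₀ (hw _)).mp h1
          have h3 : 0 < ε * w i.castSucc := mul_pos hεpos (hw _)
          have h4 : (M + ε) * w i.castSucc = M * w i.castSucc + ε * w i.castSucc := by ring
          linarith
        refine ⟨M + ε, haS, ?_⟩
        have hMw : M * w i0.castSucc = s i0 := div_mul_cancel₀ _ (hw _).ne'
        have hden : (M + ε) * w i0.castSucc - s i0 = ε * w i0.castSucc := by
          rw [add_mul, hMw]; ring
        have hterm : w i0.castSucc / ((M + ε) * w i0.castSucc - s i0) = |M| + 2 := by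
          rw [hden, hε]
          rw [div_mul_eq_div_div_swap, div_self (hw i0.castSucc).ne']
          rw [one_div_one_div]
        have hsingle : w i0.castSucc / ((M + ε) * w i0.castSucc - s i0) ≤
            ∑ i : Fin n, w i.castSucc / ((M + ε) * w i.castSucc - s i) :=
          Finset.single_le_sum (fun i _ => (hterm_pos _ haS i).le) (Finset.mem_univ i0)
        simp only [hgdef]
        have hM' : M ≤ |M| := le_abs_self M
        rw [hterm] at hsingle
        linarith
    obtain ⟨b, hab, hbS, hgb⟩ : ∃ b, a ≤ b ∧ b ∈ S ∧ g b ≤ 0 := by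
      set T := ∑ i : Fin n, |s i| / w i.castSucc with hT
      have hTnn : 0 ≤ T := Finset.sum_nonneg fun i _ => div_nonneg (abs_nonneg _) (hw _).le
      have hTi : ∀ i : Fin n, s i / w i.castSucc ≤ T := by
        intro i
        refine le_trans ?_ (Finset.single_le_sum (f := fun i => |s i| / w i.castSucc)
          (fun i _ => div_nonneg (abs_nonneg _) (hw _).le) (Finset.mem_univ i))
        exact (div_le_div_iff_of_pos_right (hw _)).mpr (le_abs_self _)
      set b := max a (T + n + 2) with hb
      have hbT : T + n + 2 ≤ b := le_max_right _ _
      have hbS : b ∈ S := hSup a haS _ (le_max_left _ _)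
      have hterm1 : ∀ i : Fin n, w i.castSucc / (b * w i.castSucc - s i) ≤ 1 := by
        intro i
        have hn : (0:ℝ) ≤ n := Nat.cast_nonneg n
        have h2 : s i / w i.castSucc ≤ b - 1 := by linarith [hTi i]
        have h1 : s i ≤ (b - 1) * w i.castSucc := (div_le_iff₀ (hw _)).mp h2
        have hd : 0 < b * w i.castSucc - s i := by have := hbS i; linarith
        rw [div_le_one hd]
        have : (b - 1) * w i.castSucc = b * w i.castSucc - w i.castSucc := by ring
        linarith
      refine ⟨b, le_max_left _ _, hbS, ?_⟩
      have hsum : (∑ i : Fin n, w i.castSucc / (b * w i.castSucc - s i)) ≤ n := by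
        calc (∑ i : Fin n, w i.castSucc / (b * w i.castSucc - s i))
            ≤ ∑ _i : Fin n, (1:ℝ) := Finset.sum_le_sum fun i _ => hterm1 i
          _ = n := by simp
      simp only [hgdef]
      linarith
    have hsub : Set.Icc a b ⊆ S := fun x hx => hSup a haS x hx.1
    have hcont : ContinuousOn g (Set.Icc a b) := by
      simp only [hgdef]
      apply ContinuousOn.sub
      apply ContinuousOn.add
      · apply continuousOn_finset_sum
        intro i _
        apply ContinuousOn.div continuousOn_const
        · exact ((continuous_id.mul continuous_const).sub continuous_const).continuousOn
        · intro x hx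
          have := hsub hx i
          intro hzero
          linarith
      · exact continuousOn_const
      · exact continuousOn_id
    obtain ⟨ρ, hρmem, hρ⟩ := intermediate_value_Icc' hab hcont ⟨hgb, hga⟩
    exact ⟨ρ, hsub hρmem, hρ⟩
  have hρsum : (∑ i : Fin n, w i.castSucc / (ρ * w i.castSucc - s i)) = ρ - 1 := by
    simp only [hgdef] at hρ0; linarith
  have hwi : ∀ i : Fin n, 0 < ρ * w i.castSucc - s i := fun i => by
    have := hρS i; linarith
  set c : Fin n → ℝ := fun i => (ρ * w i.castSucc - s i) / w (Fin.last n) with hc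
  have hcpos : ∀ i, 0 < c i := fun i => div_pos (hwi i) hwlpos
  set A : Matrix (Fin (n + 1)) (Fin (n + 1)) ℝ := fun i j =>
    Fin.lastCases (Fin.lastCases 1 (fun j' => 1 / c j') j)
      (fun i' => Fin.lastCases (c i') (fun j' => B i' j') j) i with hA
  have hAcc : ∀ i' j' : Fin n, A i'.castSucc j'.castSucc = B i' j' := by
    intro i' j'; simp [hA]
  have hAcl : ∀ i' : Fin n, A i'.castSucc (Fin.last n) = c i' := by
    intro i'; simp [hA]
  have hAlc : ∀ j' : Fin n, A (Fin.last n) j'.castSucc = 1 / c j' := by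
    intro j'; simp [hA]
  have hAll : A (Fin.last n) (Fin.last n) = 1 := by simp [hA]
  refine ⟨A, ⟨⟨?_, ?_⟩, ?_, ρ, ?_⟩, ?_⟩
  · -- positivity
    intro i j
    induction i using Fin.lastCases with
    | last =>
      induction j using Fin.lastCases with
      | last => rw [hAll]; norm_num
      | cast j' => rw [hAlc]; exact one_div_pos.mpr (hcpos j')
    | cast i' =>
      induction j using Fin.lastCases with
      | last => rw [hAcl]; exact hcpos i'
      | cast j' => rw [hAcc]; exact hBpos i' j'
  · -- reciprocal
    intro i j
    induction i using Fin.lastCases with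
    | last =>
      induction j using Fin.lastCases with
      | last => rw [hAll]; norm_num
      | cast j' => rw [hAcl, hAlc, one_div_one_div]
    | cast i' =>
      induction j using Fin.lastCases with
      | last => rw [hAlc, hAcl]
      | cast j' => rw [hAcc, hAcc]; exact hBrec i' j'
  · -- submatrix
    ext i j
    simp only [Matrix.submatrix_apply]
    exact hAcc i j
  · -- eigenvector
    funext i
    simp only [Matrix.mulVec, dotProduct, Pi.smul_apply, smul_eq_mul]
    induction i using Fin.lastCases with
    | last =>
      rw [Fin.sum_univ_castSucc]
      have h1 : ∀ j' : Fin n, A (Fin.last n) j'.castSucc * w j'.castSucc =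
          w (Fin.last n) * (w j'.castSucc / (ρ * w j'.castSucc - s j')) := by
        intro j'
        rw [hAlc, hc]
        rw [one_div_div]
        ring
      have h2 : (∑ j' : Fin n, A (Fin.last n) j'.castSucc * w j'.castSucc)
          = w (Fin.last n) * (ρ - 1) := by
        rw [Finset.sum_congr rfl fun j' _ => h1 j', ← Finset.mul_sum, hρsum]
      rw [hAll, h2]
      ring
    | cast i' =>
      rw [Fin.sum_univ_castSucc]
      have h1 : (∑ j' : Fin n, A i'.castSucc j'.castSucc * w j'.castSucc) = s i' := by
        rw [hs]
        exact Finset.sum_congr rfl fun j' _ => by rw [hAcc]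
      rw [h1, hAcl, hc, div_mul_cancel₀ _ hwlpos.ne']
      ring
  · -- uniqueness
    rintro A' ⟨⟨hA'pos, hA'rec⟩, hA'sub, ρ', hA'eig⟩
    have hA'cc : ∀ i' j' : Fin n, A' i'.castSucc j'.castSucc = B i' j' := by
      intro i' j'
      have := congrFun (congrFun hA'sub i') j'
      simpa using this
    have hA'll : A' (Fin.last n) (Fin.last n) = 1 := by
      have h := hA'rec (Fin.last n) (Fin.last n)
      have hp := hA'pos (Fin.last n) (Fin.last n)
      field_simp at h
      nlinarith
    have heig : ∀ i, (∑ j, A' i j * w j) = ρ' * w i := by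
      intro i
      have := congrFun hA'eig i
      simpa [Matrix.mulVec, dotProduct] using this
    have hA'cl : ∀ i' : Fin n, A' i'.castSucc (Fin.last n) * w (Fin.last n)
        = ρ' * w i'.castSucc - s i' := by
      intro i'
      have h := heig i'.castSucc
      rw [Fin.sum_univ_castSucc] at h
      have h1 : (∑ j' : Fin n, A' i'.castSucc j'.castSucc * w j'.castSucc) = s i' := by
        rw [hs]
        exact Finset.sum_congr rfl fun j' _ => by rw [hA'cc]
      rw [h1] at h
      linarith
    have hρ'S : ρ' ∈ S := by
      intro i
      have h := hA'cl i
      have hp : 0 < A' i.castSucc (Fin.last n) * w (Fin.last n) :=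
        mul_pos (hA'pos _ _) hwlpos
      rw [h] at hp
      linarith
    have hgρ' : g ρ' = 0 := by
      have h := heig (Fin.last n)
      rw [Fin.sum_univ_castSucc, hA'll, one_mul] at h
      have h1 : ∀ j' : Fin n, A' (Fin.last n) j'.castSucc * w j'.castSucc
          = w (Fin.last n) * (w j'.castSucc / (ρ' * w j'.castSucc - s j')) := by
        intro j'
        rw [hA'rec]
        have hd : ρ' * w j'.castSucc - s j' ≠ 0 := by
          have := hρ'S j'; intro hzero; linarith
        have h2 : A' j'.castSucc (Fin.last n) = (ρ' * w j'.castSucc - s j') / w (Fin.last n) := by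
          rw [eq_div_iff hwlpos.ne']
          exact hA'cl j'
        rw [h2, one_div_div]
        ring
      rw [Finset.sum_congr rfl fun j' _ => h1 j', ← Finset.mul_sum] at h
      have hsum' : (∑ j' : Fin n, w j'.castSucc / (ρ' * w j'.castSucc - s j')) = ρ' - 1 := by
        have h3 : w (Fin.last n) * (∑ j' : Fin n, w j'.castSucc / (ρ' * w j'.castSucc - s j'))
            = w (Fin.last n) * (ρ' - 1) := by
          have h4 : w (Fin.last n) * (ρ' - 1) = ρ' * w (Fin.last n) - w (Fin.last n) := by ring
          linarith
        exact mul_left_cancel₀ hwlpos.ne' h3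
      simp only [hgdef]
      linarith
    have hρρ' : ρ' = ρ := huniq ρ' hρ'S ρ hρS hgρ' hρ0
    subst hρρ'
    ext i j
    induction i using Fin.lastCases with
    | last =>
      induction j using Fin.lastCases with
      | last => rw [hA'll, hAll]
      | cast j' =>
        rw [hA'rec, hAlc]
        congr 1
        have : A' j'.castSucc (Fin.last n) = c j' := by
          rw [hc, eq_div_iff hwlpos.ne']
          exact hA'cl j'
        rw [this]
    | cast i' =>
      induction j using Fin.lastCases with
      | last =>
        rw [hAcl, hc, eq_div_iff hwlpos.ne']
        exact hA'cl i'
      | cast j' => rw [hA'cc, hAcc]
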